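/- Let Y₁, …, Y_k be n×n real symmetric positive definite matrices, let X* be a symmetric positive definite matrix satisfying the mean equation m(X*,Y₁)·Y₁ + … + m(X*,Y_k)·Y_k + (o(X*,Y₁) + … + o(X*,Y_k))·X* = 0, and let A be an invertible n×n real matrix. Then A X* Aᵀ satisfies the mean equation for the data (A Y₁ Aᵀ, …, A Y_k Aᵀ); that is, the inductive Thompson mean is affine-equivariant: M(A Y₁ Aᵀ, …, A Y_k Aᵀ) = A M(Y₁,…,Y_k) Aᵀ. -/

import Mathlib

open Matrix Filter Topology
open scoped Classical

noncomputable section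

/-- Square real matrices. -/
abbrev Mat (n : ℕ) := Matrix (Fin n) (Fin n) ℝ

/-- The largest element of the real spectrum of a matrix. -/
noncomputable def lamMax {n : ℕ} (A : Mat n) : ℝ := sSup (spectrum ℝ A)

/-- The smallest element of the real spectrum of a matrix. -/
noncomputable def lamMin {n : ℕ} (A : Mat n) : ℝ := sInf (spectrum ℝ A)

/-- The positive semidefinite square root (junk value `0` if not PSD). -/
noncomputable def sqrtM {n : ℕ} (X : Mat n) : Mat n :=
  if h : X.PosSemidef then
    (h.1.eigenvectorUnitary : Mat n) * Matrix.diagonal (fun i => Real.sqrt (h.1.eigenvalues i)) *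
      (star (h.1.eigenvectorUnitary : Mat n))
  else 0

/-- `X^{-1/2}` for a positive definite matrix. -/
noncomputable def invSqrt {n : ℕ} (X : Mat n) : Mat n := (sqrtM X)⁻¹

/-- `λ_max(X^{-1/2} Y X^{-1/2})`, the largest generalized eigenvalue of the pair `(Y, X)`. -/
noncomputable def gmax {n : ℕ} (X Y : Mat n) : ℝ := lamMax (invSqrt X * Y * invSqrt X)

/-- `λ_min(X^{-1/2} Y X^{-1/2})`, the smallest generalized eigenvalue of the pair `(Y, X)`. -/
noncomputable def gmin {n : ℕ} (X Y : Mat n) : ℝ := lamMin (invSqrt X * Y * invSqrt X)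

/-- The Thompson geodesic `X *_t Y`. -/
noncomputable def thompson {n : ℕ} (X Y : Mat n) (t : ℝ) : Mat n :=
  if gmin X Y = gmax X Y then (gmin X Y) ^ t • X
  else ((gmax X Y ^ t - gmin X Y ^ t) / (gmax X Y - gmin X Y)) • Y +
    ((gmax X Y * gmin X Y ^ t - gmin X Y * gmax X Y ^ t) / (gmax X Y - gmin X Y)) • X

/-- The Thompson part metric on positive definite matrices. -/
noncomputable def dT {n : ℕ} (X Y : Mat n) : ℝ :=
  max (Real.log (gmax X Y)) (Real.log (gmax Y X))

/-- Hilbert's projective metric on positive definite matrices. -/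
noncomputable def dH {n : ℕ} (X Y : Mat n) : ℝ :=
  Real.log (gmax X Y / gmin X Y)

/-- The coefficient `m(X,Y) = dφ/dt(0)` of the Thompson geodesic. -/
noncomputable def mCoef {n : ℕ} (X Y : Mat n) : ℝ :=
  if gmax X Y = gmin X Y then 1 / gmin X Y
  else (Real.log (gmax X Y) - Real.log (gmin X Y)) / (gmax X Y - gmin X Y)

/-- The coefficient `o(X,Y) = dψ/dt(0)` of the Thompson geodesic. -/
noncomputable def oCoef {n : ℕ} (X Y : Mat n) : ℝ :=
  if gmax X Y = gmin X Y then Real.log (gmin X Y) - 1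
  else (gmax X Y * Real.log (gmin X Y) - gmin X Y * Real.log (gmax X Y)) /
    (gmax X Y - gmin X Y)

/-- The mean equation `∑ⱼ m(X*,Yⱼ)·Yⱼ + (∑ⱼ o(X*,Yⱼ))·X* = 0`. -/
def MeanEq {n k : ℕ} (Y : Fin k → Mat n) (Xs : Mat n) : Prop :=
  ∑ j, mCoef Xs (Y j) • Y j + (∑ j, oCoef Xs (Y j)) • Xs = 0

/-- The Frobenius norm of a matrix. -/
noncomputable def frob {n : ℕ} (A : Mat n) : ℝ :=
  Real.sqrt (∑ i, ∑ j, (A i j) ^ 2)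

/-- The inductive sequence of Algorithm 4.1: `indSeq hk Y X₁ i = X_{i+1}`, so that
`indSeq hk Y X₁ 0 = X₁` and `X_{i+1} = X_i *_{1/(i+1)} Y_j` with `j ≡ i (mod k)`,
`1 ≤ j ≤ k`. -/
noncomputable def indSeq {n k : ℕ} (hk : 0 < k) (Y : Fin k → Mat n) (X₁ : Mat n) :
    ℕ → Mat n
  | 0 => X₁
  | (i + 1) => thompson (indSeq hk Y X₁ i) (Y ⟨i % k, Nat.mod_lt i hk⟩)
      (1 / ((i : ℝ) + 2))

/-- The map `T_p(X) = (⋯((X *_{1/(pk+2)} Y₁) *_{1/(pk+3)} Y₂)⋯) *_{1/((p+1)k+1)} Y_k`. -/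
noncomputable def Tmap {n k : ℕ} (Y : Fin k → Mat n) (p : ℕ) (X : Mat n) : Mat n :=
  (List.finRange k).foldl
    (fun Z j => thompson Z (Y j) (1 / ((p : ℝ) * (k : ℝ) + ((j : ℕ) : ℝ) + 2))) X

/-- The spectral `t`-th power of a symmetric matrix (junk value `0` otherwise). -/
noncomputable def spdPow {n : ℕ} (A : Mat n) (t : ℝ) : Mat n :=
  if h : A.IsHermitian then
    (h.eigenvectorUnitary : Mat n) * Matrix.diagonal (fun i => h.eigenvalues i ^ t) *
      (star (h.eigenvectorUnitary : Mat n))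
  else 0

/-- The affine-invariant Riemannian geodesic `X #_t Y = X^{1/2} (X^{-1/2} Y X^{-1/2})^t X^{1/2}`. -/
noncomputable def riemann {n : ℕ} (X Y : Mat n) (t : ℝ) : Mat n :=
  sqrtM X * spdPow (invSqrt X * Y * invSqrt X) t * sqrtM X

lemma sqrtM_mul_self' {n : ℕ} {X : Mat n} (hX : X.PosSemidef) :
    sqrtM X * sqrtM X = X := by
  rw [sqrtM, dif_pos hX]
  have hU : star (hX.1.eigenvectorUnitary : Mat n) * (hX.1.eigenvectorUnitary : Mat n) = 1 :=
    Unitary.star_mul_self_of_mem hX.1.eigenvectorUnitary.prop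
  have hD : Matrix.diagonal (fun i => Real.sqrt (hX.1.eigenvalues i)) *
      Matrix.diagonal (fun i => Real.sqrt (hX.1.eigenvalues i)) =
      Matrix.diagonal (RCLike.ofReal ∘ hX.1.eigenvalues) := by
    rw [Matrix.diagonal_mul_diagonal]
    congr 1; funext i
    simp [Real.mul_self_sqrt (hX.eigenvalues_nonneg i)]
  conv_rhs => rw [hX.1.spectral_theorem]
  rw [Unitary.conjStarAlgAut_apply, ← hD]
  simp only [Matrix.mul_assoc]
  rw [← Matrix.mul_assoc (star _) (hX.1.eigenvectorUnitary : Mat n), hU, Matrix.one_mul]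

lemma sqrtM_isUnit' {n : ℕ} {X : Mat n} (hX : X.PosSemidef) (hd : X.det ≠ 0) :
    IsUnit (sqrtM X) := by
  rw [Matrix.isUnit_iff_isUnit_det, isUnit_iff_ne_zero]
  intro h
  apply hd
  rw [← sqrtM_mul_self' hX, Matrix.det_mul, h, mul_zero]

/-- The spectrum of `X^{-1/2} Y X^{-1/2}` equals the spectrum of `Y X⁻¹`. -/
lemma spec_invSqrt {n : ℕ} {X : Mat n} (Y : Mat n) (hX : X.PosSemidef)
    (hd : X.det ≠ 0) :
    spectrum ℝ (invSqrt X * Y * invSqrt X) = spectrum ℝ (Y * X⁻¹) := by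
  obtain ⟨u, hu⟩ := sqrtM_isUnit' hX hd
  have hinv : invSqrt X = (↑u⁻¹ : Mat n) := by
    rw [invSqrt, ← hu, Matrix.coe_units_inv]
  have hXinv : X⁻¹ = (↑u⁻¹ : Mat n) * (↑u⁻¹ : Mat n) := by
    have hX2 : X = (↑(u * u) : Mat n) := by
      rw [Units.val_mul, hu, sqrtM_mul_self' hX]
    rw [hX2, ← Matrix.coe_units_inv, _root_.mul_inv_rev, Units.val_mul]
  have key : (u : Mat n) * (invSqrt X * Y * invSqrt X) * (↑u⁻¹ : Mat n)
      = Y * X⁻¹ := by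
    rw [hinv, hXinv]
    have h1 : (u : Mat n) * (↑u⁻¹ : Mat n) = 1 := by
      rw [← Units.val_mul, mul_inv_cancel, Units.val_one]
    calc (u : Mat n) * ((↑u⁻¹ : Mat n) * Y * (↑u⁻¹ : Mat n)) * (↑u⁻¹ : Mat n)
        = ((u : Mat n) * (↑u⁻¹ : Mat n)) * Y * ((↑u⁻¹ : Mat n) * (↑u⁻¹ : Mat n)) := by
          simp only [Matrix.mul_assoc]
      _ = Y * ((↑u⁻¹ : Mat n) * (↑u⁻¹ : Mat n)) := by rw [h1, one_mul]
  rw [← key, spectrum.units_conjugate]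

lemma posSemidef_congr {n : ℕ} {X : Mat n} (hX : X.PosSemidef) (A : Mat n) :
    (A * X * Aᵀ).PosSemidef := by
  rw [← Matrix.conjTranspose_eq_transpose_of_trivial]
  exact hX.mul_mul_conjTranspose_same A

lemma det_congr_ne {n : ℕ} {X : Mat n} (hd : X.det ≠ 0) {A : Mat n}
    (hA : IsUnit A) : (A * X * Aᵀ).det ≠ 0 := by
  have hAd : A.det ≠ 0 := by
    have := (Matrix.isUnit_iff_isUnit_det A).mp hA
    exact this.ne_zero
  rw [Matrix.det_mul, Matrix.det_mul, Matrix.det_transpose]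
  exact mul_ne_zero (mul_ne_zero hAd hd) hAd

/-- The spectra defining `gmax`/`gmin` are congruence-invariant. -/
lemma spec_congr {n : ℕ} {X : Mat n} (Y : Mat n) (hX : X.PosSemidef)
    (hd : X.det ≠ 0) {A : Mat n} (hA : IsUnit A) :
    spectrum ℝ (invSqrt (A * X * Aᵀ) * (A * Y * Aᵀ) * invSqrt (A * X * Aᵀ))
      = spectrum ℝ (invSqrt X * Y * invSqrt X) := by
  rw [spec_invSqrt Y hX hd,
    spec_invSqrt (A * Y * Aᵀ) (posSemidef_congr hX A) (det_congr_ne hd hA)]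
  have hAT : IsUnit Aᵀ.det := by
    rw [Matrix.det_transpose]; exact (Matrix.isUnit_iff_isUnit_det A).mp hA
  obtain ⟨u, hu⟩ := hA
  have key : (A * Y * Aᵀ) * (A * X * Aᵀ)⁻¹ = (u : Mat n) * (Y * X⁻¹) * (↑u⁻¹ : Mat n) := by
    rw [Matrix.mul_inv_rev, Matrix.mul_inv_rev, Matrix.coe_units_inv, hu]
    calc A * Y * Aᵀ * (Aᵀ⁻¹ * (X⁻¹ * A⁻¹))
        = A * Y * (Aᵀ * Aᵀ⁻¹) * X⁻¹ * A⁻¹ := by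
          simp only [Matrix.mul_assoc]
      _ = A * (Y * X⁻¹) * A⁻¹ := by
          rw [Matrix.mul_nonsing_inv Aᵀ hAT]
          simp only [Matrix.mul_assoc, Matrix.one_mul]
  rw [key, spectrum.units_conjugate]

/-- affine-equivariance of the inductive Thompson mean: if `X*` solves the
mean equation for `(Y₁,…,Y_k)` and `A` is invertible, then `A X* Aᵀ` solves the mean
equation for `(A Y₁ Aᵀ,…,A Y_k Aᵀ)`. -/
theorem inductive_mean_affine_equivariant {n k : ℕ} (Y : Fin k → Mat n)
    (hY : ∀ j, (Y j).PosDef) (Xs : Mat n) (hXs : Xs.PosDef) (hmean : MeanEq Y Xs)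
    (A : Mat n) (hA : IsUnit A) :
    MeanEq (fun j => A * Y j * Aᵀ) (A * Xs * Aᵀ) := by
  have hd : Xs.det ≠ 0 := hXs.det_pos.ne'
  have hspec : ∀ j, spectrum ℝ
      (invSqrt (A * Xs * Aᵀ) * (A * Y j * Aᵀ) * invSqrt (A * Xs * Aᵀ))
      = spectrum ℝ (invSqrt Xs * Y j * invSqrt Xs) := fun j =>
    spec_congr (Y j) hXs.posSemidef hd hA
  have hgmax : ∀ j, gmax (A * Xs * Aᵀ) (A * Y j * Aᵀ) = gmax Xs (Y j) := fun j => by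
    rw [gmax, gmax, lamMax, lamMax, hspec j]
  have hgmin : ∀ j, gmin (A * Xs * Aᵀ) (A * Y j * Aᵀ) = gmin Xs (Y j) := fun j => by
    rw [gmin, gmin, lamMin, lamMin, hspec j]
  have hm : ∀ j, mCoef (A * Xs * Aᵀ) (A * Y j * Aᵀ) = mCoef Xs (Y j) := fun j => by
    rw [mCoef, mCoef, hgmax j, hgmin j]
  have ho : ∀ j, oCoef (A * Xs * Aᵀ) (A * Y j * Aᵀ) = oCoef Xs (Y j) := fun j => by
    rw [oCoef, oCoef, hgmax j, hgmin j]
  unfold MeanEq at hmean ⊢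
  simp only [hm, ho]
  have : ∑ j, mCoef Xs (Y j) • (A * Y j * Aᵀ)
      + (∑ j, oCoef Xs (Y j)) • (A * Xs * Aᵀ)
      = A * (∑ j, mCoef Xs (Y j) • Y j + (∑ j, oCoef Xs (Y j)) • Xs) * Aᵀ := by
    rw [Matrix.mul_add, Matrix.add_mul, Matrix.mul_sum, Matrix.sum_mul]
    congr 1
    · exact Finset.sum_congr rfl fun j _ => by
        rw [Matrix.mul_smul, Matrix.smul_mul]
    · rw [Matrix.mul_smul, Matrix.smul_mul]
  rw [this, hmean, Matrix.mul_zero, Matrix.zero_mul]
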